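/- arXiv:1709.06616 — 5 statements merged into one kernel-verified Lean document; each statement's English description precedes it below -/
import Mathlib

section
/- Let Φ ∈ ℝ^{M×N} be such that ΦΦᵀ is positive definite, and let 0 < π_min ≤ π_max be reals with π_min·‖y‖₂ ≤ ‖Φᵀy‖₂ ≤ π_max·‖y‖₂ for all y ∈ ℝ^M. Let Ψ ∈ ℝ^{N×L}, κ ∈ ℕ, δ ∈ (0,1), and suppose that for every s ∈ ℝ^L with at most κ nonzero entries, √(1−δ)·‖Ψs‖₂ ≤ ‖ΦΨs‖₂ ≤ √(1+δ)·‖Ψs‖₂. Define Φ̄ := (ΦΦᵀ)^{-1/2}Φ, where (ΦΦᵀ)^{-1/2} is the inverse of the unique symmetric positive definite square root of ΦΦᵀ. Then for every s ∈ ℝ^L with at most κ nonzero entries, (√(1−δ)/π_max)·‖Ψs‖₂ ≤ ‖Φ̄Ψs‖₂ ≤ (√(1+δ)/π_min)·‖Ψs‖₂. -/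
open Matrix

/-- The Euclidean (ℓ₂) norm of a vector in `ℝ^n`. -/
noncomputable def l2norm {n : ℕ} (v : Fin n → ℝ) : ℝ := Real.sqrt (∑ i, v i ^ 2)

/-- The number of nonzero entries (ℓ₀ "norm") of a vector. -/
noncomputable def l0norm {n : ℕ} (v : Fin n → ℝ) : ℕ :=
  (Finset.univ.filter fun i => v i ≠ 0).card

lemma l2norm_sq {n : ℕ} (v : Fin n → ℝ) : l2norm v = Real.sqrt (v ⬝ᵥ v) := by
  simp [l2norm, dotProduct, pow_two]

/-- **Equation (3.9) in the proof of Lemma 3.1 (applied with `x = Ψs`).** If `Φ` has full row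
rank with singular values between `π_min` and `π_max` and satisfies the `Ψ`-RIP of order `κ`
with constant `δ`, then the preconditioned matrix `Φ̄ = (ΦΦᵀ)^{-1/2}Φ` satisfies
`(√(1−δ)/π_max)‖Ψs‖₂ ≤ ‖Φ̄Ψs‖₂ ≤ (√(1+δ)/π_min)‖Ψs‖₂` for all `κ`-sparse `s`.
Here `(ΦΦᵀ)^{-1/2}` is the inverse of the (unique) symmetric positive definite square root
of `ΦΦᵀ`, i.e. of any positive definite `R` with `R * R = ΦΦᵀ`. -/
theorem preconditioned_psi_rip
    {M N L κ : ℕ} (Φ : Matrix (Fin M) (Fin N) ℝ) (hPD : (Φ * Φᵀ).PosDef)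
    (πmin πmax : ℝ) (hπmin : 0 < πmin) (hπ : πmin ≤ πmax)
    (hsv : ∀ y : Fin M → ℝ,
      πmin * l2norm y ≤ l2norm (Φᵀ.mulVec y) ∧ l2norm (Φᵀ.mulVec y) ≤ πmax * l2norm y)
    (Ψ : Matrix (Fin N) (Fin L) ℝ) (δ : ℝ) (hδ : δ ∈ Set.Ioo (0 : ℝ) 1)
    (hΦΨ : ∀ s : Fin L → ℝ, l0norm s ≤ κ →
      Real.sqrt (1 - δ) * l2norm (Ψ.mulVec s) ≤ l2norm ((Φ * Ψ).mulVec s) ∧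
      l2norm ((Φ * Ψ).mulVec s) ≤ Real.sqrt (1 + δ) * l2norm (Ψ.mulVec s))
    (R : Matrix (Fin M) (Fin M) ℝ) (hR : R.PosDef) (hRsq : R * R = Φ * Φᵀ) :
    ∀ s : Fin L → ℝ, l0norm s ≤ κ →
      (Real.sqrt (1 - δ) / πmax) * l2norm (Ψ.mulVec s) ≤ l2norm ((R⁻¹ * Φ * Ψ).mulVec s) ∧
      l2norm ((R⁻¹ * Φ * Ψ).mulVec s) ≤ (Real.sqrt (1 + δ) / πmin) * l2norm (Ψ.mulVec s) := by
  intro s hs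
  have hRsym : Rᵀ = R := hR.isHermitian
  -- ‖R y‖ = ‖Φᵀ y‖ for all y
  have hRn : ∀ y : Fin M → ℝ, l2norm (R.mulVec y) = l2norm (Φᵀ.mulVec y) := by
    intro y
    rw [l2norm_sq, l2norm_sq]
    congr 1
    calc R.mulVec y ⬝ᵥ R.mulVec y = y ⬝ᵥ Rᵀ.mulVec (R.mulVec y) := by
          rw [dotProduct_mulVec, ← mulVec_transpose, dotProduct_comm]
      _ = y ⬝ᵥ (Φ * Φᵀ).mulVec y := by rw [hRsym, mulVec_mulVec, hRsq]
      _ = Φᵀ.mulVec y ⬝ᵥ Φᵀ.mulVec y := by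
          rw [← mulVec_mulVec, dotProduct_mulVec, ← mulVec_transpose]
  have hRinv : R * R⁻¹ = 1 := mul_nonsing_inv R (isUnit_iff_ne_zero.mpr (ne_of_gt hR.det_pos))
  set z : Fin M → ℝ := (Φ * Ψ).mulVec s with hz
  have hzz : (R⁻¹ * Φ * Ψ).mulVec s = R⁻¹.mulVec z := by
    rw [hz, Matrix.mul_assoc, ← mulVec_mulVec]
  have hRz : R.mulVec (R⁻¹.mulVec z) = z := by
    rw [mulVec_mulVec, hRinv, one_mulVec]
  have h1 := hsv (R⁻¹.mulVec z)
  rw [← hRn, hRz] at h1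
  obtain ⟨hlo, hhi⟩ := h1
  obtain ⟨hrlo, hrhi⟩ := hΦΨ s hs
  rw [hzz]
  constructor
  · rw [div_mul_eq_mul_div, div_le_iff₀ (lt_of_lt_of_le hπmin hπ)]
    nlinarith
  · rw [div_mul_eq_mul_div, le_div_iff₀ hπmin]
    nlinarith
end

section
/- Let Φ ∈ ℝ^{M×N} with ΦΦᵀ positive definite, and 0 < π_min ≤ π_max with π_min·‖y‖₂ ≤ ‖Φᵀy‖₂ ≤ π_max·‖y‖₂ for all y ∈ ℝ^M. Let Ψ ∈ ℝ^{N×L}, κ ∈ ℕ, γ, δ ∈ (0,1), and suppose (i) for every s ∈ ℝ^L with at most κ nonzero entries, √(1−γ)·‖s‖₂ ≤ ‖Ψs‖₂ ≤ √(1+γ)·‖s‖₂, and (ii) for every such s, √(1−δ)·‖Ψs‖₂ ≤ ‖ΦΨs‖₂ ≤ √(1+δ)·‖Ψs‖₂. Define Φ̄ := (ΦΦᵀ)^{-1/2}Φ, where (ΦΦᵀ)^{-1/2} is the inverse of the unique symmetric positive definite square root of ΦΦᵀ, and Ā := Φ̄Ψ. Then for every s ∈ ℝ^L with at most κ nonzero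 entries, (√((1−δ)(1−γ))/π_max)·‖s‖₂ ≤ ‖Ās‖₂ ≤ (√((1+δ)(1+γ))/π_min)·‖s‖₂. -/
open Matrix

lemma l2norm_nonneg {n : ℕ} (v : Fin n → ℝ) : 0 ≤ l2norm v := Real.sqrt_nonneg _

/-- **Equation (3.7) of Lemma 3.1.** If `Ψ` satisfies the RIP of order `κ` with constant `γ`,
`Φ` has full row rank with singular values between `π_min` and `π_max` and satisfies the
`Ψ`-RIP of order `κ` with constant `δ`, then the preconditioned equivalent dictionary
`Ā = (ΦΦᵀ)^{-1/2}ΦΨ` satisfies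
`(√((1−δ)(1−γ))/π_max)‖s‖₂ ≤ ‖Ās‖₂ ≤ (√((1+δ)(1+γ))/π_min)‖s‖₂` for all `κ`-sparse `s`.
Here `(ΦΦᵀ)^{-1/2}` is the inverse of the (unique) symmetric positive definite square root of
`ΦΦᵀ`, i.e. of any positive definite `R` with `R * R = ΦΦᵀ`. -/
theorem preconditioned_equivalent_dictionary_rip
    {M N L κ : ℕ} (Φ : Matrix (Fin M) (Fin N) ℝ) (hPD : (Φ * Φᵀ).PosDef)
    (πmin πmax : ℝ) (hπmin : 0 < πmin) (hπ : πmin ≤ πmax)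
    (hsv : ∀ y : Fin M → ℝ,
      πmin * l2norm y ≤ l2norm (Φᵀ.mulVec y) ∧ l2norm (Φᵀ.mulVec y) ≤ πmax * l2norm y)
    (Ψ : Matrix (Fin N) (Fin L) ℝ) (γ δ : ℝ)
    (hγ : γ ∈ Set.Ioo (0 : ℝ) 1) (hδ : δ ∈ Set.Ioo (0 : ℝ) 1)
    (hΨ : ∀ s : Fin L → ℝ, l0norm s ≤ κ →
      Real.sqrt (1 - γ) * l2norm s ≤ l2norm (Ψ.mulVec s) ∧
      l2norm (Ψ.mulVec s) ≤ Real.sqrt (1 + γ) * l2norm s)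
    (hΦΨ : ∀ s : Fin L → ℝ, l0norm s ≤ κ →
      Real.sqrt (1 - δ) * l2norm (Ψ.mulVec s) ≤ l2norm ((Φ * Ψ).mulVec s) ∧
      l2norm ((Φ * Ψ).mulVec s) ≤ Real.sqrt (1 + δ) * l2norm (Ψ.mulVec s))
    (R : Matrix (Fin M) (Fin M) ℝ) (hR : R.PosDef) (hRsq : R * R = Φ * Φᵀ) :
    ∀ s : Fin L → ℝ, l0norm s ≤ κ →
      (Real.sqrt ((1 - δ) * (1 - γ)) / πmax) * l2norm s ≤
        l2norm ((R⁻¹ * Φ * Ψ).mulVec s) ∧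
      l2norm ((R⁻¹ * Φ * Ψ).mulVec s) ≤
        (Real.sqrt ((1 + δ) * (1 + γ)) / πmin) * l2norm s := by
  -- key: ‖R y‖ = ‖Φᵀ y‖ for all y
  have hRT : Rᵀ = R := hR.isHermitian.eq
  have key : ∀ y : Fin M → ℝ, l2norm (R.mulVec y) = l2norm (Φᵀ.mulVec y) := by
    intro y
    unfold l2norm
    congr 1
    have h1 : ∑ i, (R.mulVec y i) ^ 2 = (R.mulVec y) ⬝ᵥ (R.mulVec y) := by
      simp [dotProduct, sq]
    have h2 : ∑ i, (Φᵀ.mulVec y i) ^ 2 = (Φᵀ.mulVec y) ⬝ᵥ (Φᵀ.mulVec y) := by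
      simp [dotProduct, sq]
    rw [h1, h2]
    rw [Matrix.dotProduct_mulVec, ← Matrix.mulVec_transpose, hRT, Matrix.mulVec_mulVec, hRsq,
      Matrix.dotProduct_mulVec, Matrix.vecMul_transpose, Matrix.mulVec_mulVec]
  -- R bounds
  have hRbound : ∀ y : Fin M → ℝ,
      πmin * l2norm y ≤ l2norm (R.mulVec y) ∧ l2norm (R.mulVec y) ≤ πmax * l2norm y := by
    intro y; rw [key y]; exact hsv y
  have hRinv : ∀ x : Fin M → ℝ, R.mulVec (R⁻¹.mulVec x) = x := by
    intro x
    rw [Matrix.mulVec_mulVec, Matrix.mul_nonsing_inv _ hR.det_pos.ne.symm.isUnit,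
      Matrix.one_mulVec]
  intro s hs
  set x : Fin M → ℝ := (Φ * Ψ).mulVec s with hx
  have hAs : (R⁻¹ * Φ * Ψ).mulVec s = R⁻¹.mulVec x := by
    rw [hx, Matrix.mul_assoc, ← Matrix.mulVec_mulVec]
  have hb := hRbound (R⁻¹.mulVec x)
  rw [hRinv x] at hb
  -- ‖x‖/πmax ≤ ‖R⁻¹ x‖ ≤ ‖x‖/πmin
  have hlow : l2norm x / πmax ≤ l2norm (R⁻¹.mulVec x) := by
    rw [div_le_iff₀ (lt_of_lt_of_le hπmin hπ)]
    linarith [hb.2]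
  have hhigh : l2norm (R⁻¹.mulVec x) ≤ l2norm x / πmin := by
    rw [le_div_iff₀ hπmin]
    linarith [hb.1]
  -- RIP bounds on x
  have h1 := hΨ s hs
  have h2 := hΦΨ s hs
  have hδ1 : (0:ℝ) ≤ 1 - δ := by linarith [hδ.2]
  have hγ1 : (0:ℝ) ≤ 1 - γ := by linarith [hγ.2]
  have hδ2 : (0:ℝ) ≤ 1 + δ := by linarith [hδ.1]
  have hsm : Real.sqrt ((1 - δ) * (1 - γ)) = Real.sqrt (1 - δ) * Real.sqrt (1 - γ) :=
    Real.sqrt_mul hδ1 _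
  have hsp : Real.sqrt ((1 + δ) * (1 + γ)) = Real.sqrt (1 + δ) * Real.sqrt (1 + γ) :=
    Real.sqrt_mul hδ2 _
  have hxlow : Real.sqrt ((1 - δ) * (1 - γ)) * l2norm s ≤ l2norm x := by
    rw [hsm]
    calc Real.sqrt (1 - δ) * Real.sqrt (1 - γ) * l2norm s
        = Real.sqrt (1 - δ) * (Real.sqrt (1 - γ) * l2norm s) := by ring
      _ ≤ Real.sqrt (1 - δ) * l2norm (Ψ.mulVec s) := by
          exact mul_le_mul_of_nonneg_left h1.1 (Real.sqrt_nonneg _)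
      _ ≤ l2norm x := h2.1
  have hxhigh : l2norm x ≤ Real.sqrt ((1 + δ) * (1 + γ)) * l2norm s := by
    rw [hsp]
    calc l2norm x ≤ Real.sqrt (1 + δ) * l2norm (Ψ.mulVec s) := h2.2
      _ ≤ Real.sqrt (1 + δ) * (Real.sqrt (1 + γ) * l2norm s) := by
          exact mul_le_mul_of_nonneg_left h1.2 (Real.sqrt_nonneg _)
      _ = Real.sqrt (1 + δ) * Real.sqrt (1 + γ) * l2norm s := by ring
  rw [hAs]
  constructor
  · calc (Real.sqrt ((1 - δ) * (1 - γ)) / πmax) * l2norm s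
        = Real.sqrt ((1 - δ) * (1 - γ)) * l2norm s / πmax := by ring
      _ ≤ l2norm x / πmax := by
          have hπmax : 0 < πmax := lt_of_lt_of_le hπmin hπ
          gcongr
      _ ≤ l2norm (R⁻¹.mulVec x) := hlow
  · calc l2norm (R⁻¹.mulVec x) ≤ l2norm x / πmin := hhigh
      _ ≤ Real.sqrt ((1 + δ) * (1 + γ)) * l2norm s / πmin := by gcongr
      _ = (Real.sqrt ((1 + δ) * (1 + γ)) / πmin) * l2norm s := by ring
end

section
/- Let A ∈ ℝ^{M×L}, y ∈ ℝ^M, and κ ∈ ℕ. Suppose ŝ ∈ ℝ^L has exactly κ nonzero entries and satisfies ‖y − Aŝ‖₂ ≤ ‖y − Az‖₂ for every z ∈ ℝ^L whose support is contained in the support of ŝ. Then ŝ is a local minimizer of s ↦ ‖y − As‖₂² over the set {s ∈ ℝ^L : ‖s‖₀ ≤ κ}: there exists ε > 0 such that ‖y − Aŝ‖₂ ≤ ‖y − As‖₂ for every s with at most κ nonzero entries and ‖s − ŝ‖₂ < ε. -/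
open Matrix

lemma abs_le_l2norm {n : ℕ} (v : Fin n → ℝ) (i : Fin n) : |v i| ≤ l2norm v := by
  rw [l2norm, ← Real.sqrt_sq_eq_abs]
  apply Real.sqrt_le_sqrt
  exact Finset.single_le_sum (f := fun j => v j ^ 2) (fun j _ => sq_nonneg _)
    (Finset.mem_univ i)

/-- **First case in the proof of Lemma 5.1.** If `ŝ` has exactly `κ` nonzero entries and
minimizes the residual `‖y − Az‖₂` over all `z` supported on the support of `ŝ`, then `ŝ` is
a local minimizer of `s ↦ ‖y − As‖₂²` over the set of `κ`-sparse vectors. -/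
theorem omp_output_local_minimizer
    {M L κ : ℕ} (A : Matrix (Fin M) (Fin L) ℝ) (y : Fin M → ℝ)
    (shat : Fin L → ℝ) (hcard : l0norm shat = κ)
    (hopt : ∀ z : Fin L → ℝ, (∀ i, z i ≠ 0 → shat i ≠ 0) →
      l2norm (y - A.mulVec shat) ≤ l2norm (y - A.mulVec z)) :
    ∃ ε > 0, ∀ s : Fin L → ℝ, l0norm s ≤ κ → l2norm (s - shat) < ε →
      l2norm (y - A.mulVec shat) ≤ l2norm (y - A.mulVec s) := by
  classical
  set T : Finset (Fin L) := Finset.univ.filter fun i => shat i ≠ 0 with hT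
  by_cases hne : T.Nonempty
  · obtain ⟨ε, hεmem, hεmin⟩ := (T.image fun i => |shat i|).exists_min_image id
      (hne.image _)
    simp only [Finset.mem_image] at hεmem
    obtain ⟨i₀, hi₀, hεeq⟩ := hεmem
    have hεpos : 0 < ε := by
      rw [← hεeq]
      simp only [hT, Finset.mem_filter] at hi₀
      exact abs_pos.mpr hi₀.2
    refine ⟨ε, hεpos, fun s hs hclose => ?_⟩
    -- every index in T is in the support of s
    have hsub : T ⊆ Finset.univ.filter fun i => s i ≠ 0 := by
      intro i hi
      have hiT := hi
      simp only [hT, Finset.mem_filter] at hi ⊢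
      refine ⟨Finset.mem_univ _, fun h0 => ?_⟩
      have h1 : |shat i| < ε := by
        have : |s i - shat i| ≤ l2norm (s - shat) := by
          simpa using abs_le_l2norm (s - shat) i
        have h2 : |s i - shat i| < ε := lt_of_le_of_lt this hclose
        simpa [h0] using h2
      have h3 : ε ≤ |shat i| := by
        have := hεmin |shat i| (Finset.mem_image_of_mem _ hiT)
        simpa using this
      linarith
    have hcards : (Finset.univ.filter fun i => s i ≠ 0).card ≤ T.card := by
      have hTcard : T.card = κ := by simpa [l0norm, hT] using hcard
      rw [hTcard]
      simpa [l0norm] using hs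
    have heq : T = Finset.univ.filter fun i => s i ≠ 0 :=
      Finset.eq_of_subset_of_card_le hsub hcards
    apply hopt
    intro i hsi
    have : i ∈ T := heq ▸ (Finset.mem_filter.mpr ⟨Finset.mem_univ _, hsi⟩)
    simpa [hT] using (Finset.mem_filter.mp this).2
  · -- T empty: κ = 0, so s = 0 on any s with l0norm s ≤ κ
    refine ⟨1, one_pos, fun s hs _ => ?_⟩
    have hκ : κ = 0 := by
      rw [← hcard]
      simp [l0norm, ← hT, Finset.not_nonempty_iff_eq_empty.mp hne]
    apply hopt
    intro i hsi
    exfalso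
    have : (Finset.univ.filter fun j => s j ≠ 0).card = 0 := by
      have := hs; simp only [l0norm, hκ, Nat.le_zero] at this; exact this
    have hiT : i ∈ Finset.univ.filter fun j => s j ≠ 0 :=
      Finset.mem_filter.mpr ⟨Finset.mem_univ _, hsi⟩
    simp [Finset.card_eq_zero.mp this] at hiT
end

section
/- Let N ≥ 1, σ ∈ ℝ^N, d̄ ∈ ℝ^N, and define g(λ) := ∑_{n=1}^N d̄_n²/(σ_n − λ)² and ξ̃(λ) := ∑_{n=1}^N d̄_n²/(λ − σ_n) + λ, for λ ∉ {σ₁, …, σ_N}. If λ and λ' are two reals with λ > λ', λ, λ' ∉ {σ₁, …, σ_N}, and g(λ) = g(λ') = 1, then ξ̃(λ') ≤ ξ̃(λ). In particular, among the solutions of g(λ) = 1, the value of ξ̃ is monotone in λ. -/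
/-- **Monotonicity of the objective along KKT multipliers (Theorem 4.1, third bullet).**
For `g(λ) = ∑ d̄ₙ²/(σₙ − λ)²` and `ξ̃(λ) = ∑ d̄ₙ²/(λ − σₙ) + λ`, if `λ > λ'`, neither is an
eigenvalue `σₙ`, and `g(λ) = g(λ') = 1`, then `ξ̃(λ') ≤ ξ̃(λ)`. -/
theorem cqp_objective_monotone_in_multiplier
    {N : ℕ} (hN : 1 ≤ N) (σ dbar : Fin N → ℝ) (lam lam' : ℝ)
    (hlt : lam' < lam)
    (hlam : ∀ n, lam ≠ σ n) (hlam' : ∀ n, lam' ≠ σ n)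
    (hg : ∑ n, dbar n ^ 2 / (σ n - lam) ^ 2 = 1)
    (hg' : ∑ n, dbar n ^ 2 / (σ n - lam') ^ 2 = 1) :
    (∑ n, dbar n ^ 2 / (lam' - σ n)) + lam' ≤
      (∑ n, dbar n ^ 2 / (lam - σ n)) + lam := by
  set a : Fin N → ℝ := fun n => dbar n / (lam - σ n) with ha
  set b : Fin N → ℝ := fun n => dbar n / (lam' - σ n) with hb
  have hne : ∀ n, lam - σ n ≠ 0 := fun n => sub_ne_zero.mpr (hlam n)
  have hne' : ∀ n, lam' - σ n ≠ 0 := fun n => sub_ne_zero.mpr (hlam' n)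
  have ha2 : ∑ n, a n ^ 2 = 1 := by
    rw [← hg]; apply Finset.sum_congr rfl; intro n _
    rw [ha]; field_simp; ring
  have hb2 : ∑ n, b n ^ 2 = 1 := by
    rw [← hg']; apply Finset.sum_congr rfl; intro n _
    rw [hb]; field_simp; ring
  have hCS : (∑ n, a n * b n) ^ 2 ≤ (∑ n, a n ^ 2) * (∑ n, b n ^ 2) :=
    Finset.sum_mul_sq_le_sq_mul_sq Finset.univ a b
  rw [ha2, hb2, mul_one] at hCS
  have hS : ∑ n, a n * b n ≤ 1 := by nlinarith [sq_nonneg (∑ n, a n * b n - 1)]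
  have hdiff : (∑ n, dbar n ^ 2 / (lam - σ n)) - (∑ n, dbar n ^ 2 / (lam' - σ n))
      = (lam' - lam) * ∑ n, a n * b n := by
    rw [Finset.mul_sum, ← Finset.sum_sub_distrib]
    apply Finset.sum_congr rfl; intro n _
    rw [ha, hb]
    field_simp [hne n, hne' n]
    ring
  nlinarith [hS, hdiff, hlt]
end

section
/- Let N ≥ 1, σ ∈ ℝ^N, and d̄ ∈ ℝ^N with d̄_n ≠ 0 for all n, and define g(λ) := ∑_{n=1}^N d̄_n²/(σ_n − λ)². Set λ* := max_{1 ≤ ℓ ≤ N} (σ_ℓ + |d̄_ℓ|). Then there exists λ ≥ λ* with g(λ) = 1; that is, the largest solution λ₁ of the secular equation g(λ) = 1 satisfies λ₁ ≥ max_ℓ (σ_ℓ + |d̄_ℓ|). -/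
/-- **Localization of the largest root (second bullet of Theorem 4.1).** If `d̄ₙ ≠ 0` for all
`n`, then the secular equation `g(λ) = ∑ d̄ₙ²/(σₙ − λ)² = 1` has a solution
`λ ≥ λ* = maxₗ (σₗ + |d̄ₗ|)`. -/
theorem secular_equation_largest_root_lower_bound
    {N : ℕ} (hN : 1 ≤ N) (σ dbar : Fin N → ℝ) (hd : ∀ n, dbar n ≠ 0) :
    ∃ lam : ℝ,
      (Finset.univ.sup' (Finset.univ_nonempty_iff.mpr (Fin.pos_iff_nonempty.mp hN))
          fun ℓ => σ ℓ + |dbar ℓ|) ≤ lam ∧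
      ∑ n, dbar n ^ 2 / (σ n - lam) ^ 2 = 1 := by
  have hne : (Finset.univ : Finset (Fin N)).Nonempty :=
    Finset.univ_nonempty_iff.mpr (Fin.pos_iff_nonempty.mp hN)
  set g : ℝ → ℝ := fun lam => ∑ n, dbar n ^ 2 / (σ n - lam) ^ 2 with hg
  set a : ℝ := Finset.univ.sup' hne fun ℓ => σ ℓ + |dbar ℓ| with ha
  set b : ℝ := Finset.univ.sup' hne fun ℓ => σ ℓ + |dbar ℓ| * Real.sqrt N with hb
  have hsqrt1 : (1:ℝ) ≤ Real.sqrt N := by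
    rw [show (1:ℝ) = Real.sqrt 1 by simp]
    exact Real.sqrt_le_sqrt (by exact_mod_cast hN)
  -- a ≤ b
  have hab : a ≤ b := by
    apply Finset.sup'_le
    intro ℓ _
    refine le_trans ?_ (Finset.le_sup' (fun ℓ => σ ℓ + |dbar ℓ| * Real.sqrt N) (Finset.mem_univ ℓ))
    have := abs_nonneg (dbar ℓ)
    nlinarith
  -- every σ n < a
  have hσa : ∀ n : Fin N, σ n < a := by
    intro n
    have h1 : σ n + |dbar n| ≤ a := Finset.le_sup' (fun ℓ => σ ℓ + |dbar ℓ|) (Finset.mem_univ n)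
    have h2 : 0 < |dbar n| := abs_pos.mpr (hd n)
    linarith
  -- g a ≥ 1
  have hga : 1 ≤ g a := by
    obtain ⟨ℓ, _, hℓ⟩ := Finset.exists_mem_eq_sup' hne fun ℓ => σ ℓ + |dbar ℓ|
    have hterm : dbar ℓ ^ 2 / (σ ℓ - a) ^ 2 = 1 := by
      rw [ha, hℓ]
      have : σ ℓ - (σ ℓ + |dbar ℓ|) = -|dbar ℓ| := by ring
      rw [this]
      have : (-|dbar ℓ|) ^ 2 = dbar ℓ ^ 2 := by rw [neg_pow]; simp [sq_abs]
      rw [this]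
      exact div_self (pow_ne_zero 2 (hd ℓ))
    calc (1:ℝ) = dbar ℓ ^ 2 / (σ ℓ - a) ^ 2 := hterm.symm
      _ ≤ g a := by
          simp only [hg]
          exact Finset.single_le_sum (f := fun n => dbar n ^ 2 / (σ n - a) ^ 2)
            (fun n _ => by positivity) (Finset.mem_univ ℓ)
  -- g b ≤ 1
  have hgb : g b ≤ 1 := by
    have hNpos : (0:ℝ) < N := by exact_mod_cast hN
    have hbound : ∀ n : Fin N, dbar n ^ 2 / (σ n - b) ^ 2 ≤ 1 / N := by
      intro n
      have h1 : σ n + |dbar n| * Real.sqrt N ≤ b := Finset.le_sup' (fun ℓ => σ ℓ + |dbar ℓ| * Real.sqrt N) (Finset.mem_univ n)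
      have h2 : 0 < |dbar n| := abs_pos.mpr (hd n)
      have h3 : |dbar n| * Real.sqrt N ≤ b - σ n := by linarith
      have h4 : (0:ℝ) < |dbar n| * Real.sqrt N := by positivity
      have h5 : dbar n ^ 2 * N ≤ (σ n - b) ^ 2 := by
        have : (|dbar n| * Real.sqrt N) ^ 2 ≤ (b - σ n) ^ 2 := by
          apply pow_le_pow_left₀ (le_of_lt h4) h3
        have hs : (Real.sqrt N) ^ 2 = N := Real.sq_sqrt (le_of_lt hNpos)
        calc dbar n ^ 2 * N = (|dbar n| * Real.sqrt N) ^ 2 := by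
              rw [mul_pow, hs, sq_abs]
          _ ≤ (b - σ n) ^ 2 := this
          _ = (σ n - b) ^ 2 := by ring
      rw [div_le_div_iff₀ (by nlinarith : (0:ℝ) < (σ n - b) ^ 2) hNpos]
      linarith
    calc g b ≤ ∑ _n : Fin N, (1:ℝ) / N :=
          Finset.sum_le_sum (fun n _ => hbound n)
      _ = 1 := by
          rw [Finset.sum_const, Finset.card_univ, Fintype.card_fin, nsmul_eq_mul]
          field_simp
  -- continuity on [a, b]
  have hcont : ContinuousOn g (Set.Icc a b) := by
    apply continuousOn_finset_sum
    intro n _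
    apply ContinuousOn.div
    · exact continuousOn_const
    · exact ((continuous_const.sub continuous_id).pow 2).continuousOn
    · intro x hx
      have : σ n < x := lt_of_lt_of_le (hσa n) hx.1
      exact pow_ne_zero 2 (sub_ne_zero.mpr (ne_of_lt this))
  have key : (1:ℝ) ∈ g '' Set.Icc a b := by
    apply intermediate_value_Icc' hab hcont
    exact ⟨hgb, hga⟩
  obtain ⟨lam, hlam, hglam⟩ := key
  exact ⟨lam, hlam.1, hglam⟩
end
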